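/- arXiv:1403.6032 — 4 statements merged into one kernel-verified Lean document; each statement's English description precedes it below -/
import Mathlib

section
/- Let (X, Σ) be a measurable space with two finite measures μ and ν. If Σ is generated by a field F, then the total variation distance satisfies sup_{E ∈ Σ} |μ(E) − ν(E)| = sup_{E ∈ F} |μ(E) − ν(E)|. -/
open MeasureTheory

/-- If the σ-algebra is generated by a field `𝒜`, the total variation distance between
two finite measures is already attained as a supremum over `𝒜`. -/
theorem totalVariation_sup_on_field {X : Type*} (𝒜 : Set (Set X))
    (h𝒜 : IsSetAlgebra 𝒜)
    (μ ν : @Measure X (MeasurableSpace.generateFrom 𝒜))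
    (hμ : μ Set.univ < ⊤) (hν : ν Set.univ < ⊤) :
    sSup {r : ℝ | ∃ E : Set X, MeasurableSet[MeasurableSpace.generateFrom 𝒜] E ∧
        r = |(μ E).toReal - (ν E).toReal|}
      = sSup {r : ℝ | ∃ E ∈ 𝒜, r = |(μ E).toReal - (ν E).toReal|} := by
  letI m : MeasurableSpace X := MeasurableSpace.generateFrom 𝒜
  haveI : IsFiniteMeasure μ := ⟨hμ⟩
  haveI : IsFiniteMeasure ν := ⟨hν⟩
  haveI : IsFiniteMeasure (μ + ν) := by infer_instance
  set S := {r : ℝ | ∃ E : Set X, MeasurableSet[m] E ∧ r = |(μ E).toReal - (ν E).toReal|}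
  set T := {r : ℝ | ∃ E ∈ 𝒜, r = |(μ E).toReal - (ν E).toReal|}
  have hTS : T ⊆ S := by
    rintro r ⟨E, hE, rfl⟩
    exact ⟨E, MeasurableSpace.measurableSet_generateFrom hE, rfl⟩
  have hSne : S.Nonempty := ⟨_, ∅, MeasurableSet.empty, rfl⟩
  have hTne : T.Nonempty := ⟨_, ∅, h𝒜.empty_mem, rfl⟩
  have hSbdd : BddAbove S := by
    refine ⟨(μ Set.univ).toReal + (ν Set.univ).toReal, ?_⟩
    rintro r ⟨E, hE, rfl⟩
    have h1 : (μ E).toReal ≤ (μ Set.univ).toReal :=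
      ENNReal.toReal_mono hμ.ne (measure_mono (Set.subset_univ E))
    have h2 : (ν E).toReal ≤ (ν Set.univ).toReal :=
      ENNReal.toReal_mono hν.ne (measure_mono (Set.subset_univ E))
    have h3 : (0:ℝ) ≤ (μ E).toReal := ENNReal.toReal_nonneg
    have h4 : (0:ℝ) ≤ (ν E).toReal := ENNReal.toReal_nonneg
    rw [abs_sub_le_iff]
    constructor <;> linarith
  have hTbdd : BddAbove T := hSbdd.mono hTS
  refine le_antisymm ?_ (csSup_le_csSup hSbdd hTne hTS)
  refine csSup_le hSne ?_
  rintro r ⟨E, hE, rfl⟩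
  refine le_of_forall_pos_le_add fun ε hε ↦ ?_
  have hdense : (μ + ν).MeasureDense 𝒜 :=
    Measure.MeasureDense.of_generateFrom_isSetAlgebra_finite (μ + ν) h𝒜 rfl
  obtain ⟨A, hA𝒜, hAapprox⟩ := hdense.approx E hE (measure_ne_top _ _) ε hε
  have hAm : MeasurableSet[m] A := MeasurableSpace.measurableSet_generateFrom hA𝒜
  have hμd : |(μ E).toReal - (μ A).toReal| ≤ (μ (symmDiff E A)).toReal :=
    abs_measureReal_sub_le_measureReal_symmDiff hE.nullMeasurableSet hAm.nullMeasurableSet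
  have hνd : |(ν E).toReal - (ν A).toReal| ≤ (ν (symmDiff E A)).toReal :=
    abs_measureReal_sub_le_measureReal_symmDiff hE.nullMeasurableSet hAm.nullMeasurableSet
  have hsum : (μ (symmDiff E A)).toReal + (ν (symmDiff E A)).toReal < ε := by
    have : ((μ + ν) (symmDiff E A)).toReal < ε := by
      rw [← ENNReal.ofReal_toReal (measure_ne_top (μ + ν) _)] at hAapprox
      exact (ENNReal.ofReal_lt_ofReal_iff hε).mp hAapprox
    rwa [Measure.add_apply, ENNReal.toReal_add (measure_ne_top _ _) (measure_ne_top _ _)] at this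
  have hmemT : |(μ A).toReal - (ν A).toReal| ∈ T := ⟨A, hA𝒜, rfl⟩
  have key : |(μ E).toReal - (ν E).toReal| ≤ |(μ A).toReal - (ν A).toReal| + ε := by
    have := abs_sub_abs_le_abs_sub ((μ E).toReal - (ν E).toReal) ((μ A).toReal - (ν A).toReal)
    have h5 : |(μ E).toReal - (ν E).toReal - ((μ A).toReal - (ν A).toReal)|
        ≤ |(μ E).toReal - (μ A).toReal| + |(ν E).toReal - (ν A).toReal| := by
      have := abs_sub ((μ E).toReal - (μ A).toReal) ((ν E).toReal - (ν A).toReal)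
      calc _ = |(μ E).toReal - (μ A).toReal - ((ν E).toReal - (ν A).toReal)| := by ring_nf
        _ ≤ _ := this
    calc |(μ E).toReal - (ν E).toReal|
        ≤ |(μ A).toReal - (ν A).toReal|
          + |(μ E).toReal - (ν E).toReal - ((μ A).toReal - (ν A).toReal)| := by
          have := abs_add_le ((μ A).toReal - (ν A).toReal)
            ((μ E).toReal - (ν E).toReal - ((μ A).toReal - (ν A).toReal))
          simpa using this
      _ ≤ |(μ A).toReal - (ν A).toReal| + ((μ (symmDiff E A)).toReal
            + (ν (symmDiff E A)).toReal) := by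
          have := le_trans h5 (add_le_add hμd hνd)
          linarith
      _ ≤ |(μ A).toReal - (ν A).toReal| + ε := by linarith
  exact key.trans (add_le_add_left (le_csSup hTbdd hmemT) ε)
end

section
/- Let μ, ν be probability measures on a measurable space (X, Σ) where the diagonal is measurable in the product σ-algebra. Then the total variation distance equals the minimum discrepancy over couplings: sup_{E ∈ Σ} |μ(E) − ν(E)| = min { ω({(x,y) : x ≠ y}) : ω is a coupling of (μ, ν) }, and the minimum is attained by some coupling. -/
open MeasureTheory
open scoped ENNReal

open Set in
private lemma key_ineq {X : Type*} [MeasurableSpace X]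
    (κ ρ : Measure X) (Q : Set X) (hQ : MeasurableSet Q)
    (h1 : ∀ t, MeasurableSet t → t ⊆ Q → ρ t ≤ κ t)
    (h2 : ∀ t, MeasurableSet t → t ⊆ Qᶜ → κ t ≤ ρ t)
    (E : Set X) (hE : MeasurableSet E) :
    κ E + ρ Q ≤ ρ E + κ Q := by
  have eκE := measure_inter_add_diff (μ := κ) E hQ
  have eρE := measure_inter_add_diff (μ := ρ) E hQ
  have eκQ := measure_inter_add_diff (μ := κ) Q hE
  have eρQ := measure_inter_add_diff (μ := ρ) Q hE
  have hEdiff : κ (E \ Q) ≤ ρ (E \ Q) :=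
    h2 _ (hE.diff hQ) (fun x hx => hx.2)
  have hQdiff : ρ (Q \ E) ≤ κ (Q \ E) :=
    h1 _ (hQ.diff hE) (fun x hx => hx.1)
  have hinter : κ (E ∩ Q) = κ (Q ∩ E) := by rw [Set.inter_comm]
  have hinter' : ρ (Q ∩ E) = ρ (E ∩ Q) := by rw [Set.inter_comm]
  calc κ E + ρ Q = (κ (E ∩ Q) + κ (E \ Q)) + (ρ (Q ∩ E) + ρ (Q \ E)) := by
        rw [eκE, eρQ]
    _ ≤ (ρ (E ∩ Q) + ρ (E \ Q)) + (κ (Q ∩ E) + κ (Q \ E)) := by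
        rw [hinter, hinter']
        calc κ (Q ∩ E) + κ (E \ Q) + (ρ (E ∩ Q) + ρ (Q \ E))
            ≤ κ (Q ∩ E) + ρ (E \ Q) + (ρ (E ∩ Q) + κ (Q \ E)) := by
              gcongr
          _ = ρ (E ∩ Q) + ρ (E \ Q) + (κ (Q ∩ E) + κ (Q \ E)) := by ring
    _ = ρ E + κ Q := by rw [eρE, eκQ]

set_option maxHeartbeats 2000000 in
/-- Coupling characterization of the total variation distance: there is a coupling `ω*`
of `(μ, ν)` attaining `sup_E |μ E − ν E| = ω* {(x,y) | x ≠ y}`, and `ω*` minimizes the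
discrepancy among all couplings. -/
theorem totalVariation_eq_min_coupling {X : Type*} [MeasurableSpace X]
    (hD : MeasurableSet {p : X × X | p.1 ≠ p.2})
    (μ ν : Measure X) [IsProbabilityMeasure μ] [IsProbabilityMeasure ν] :
    ∃ ω : Measure (X × X), IsProbabilityMeasure ω ∧
      ω.map Prod.fst = μ ∧ ω.map Prod.snd = ν ∧
      (ω {p : X × X | p.1 ≠ p.2}).toReal
        = sSup {r : ℝ | ∃ E : Set X, MeasurableSet E ∧ r = |(μ E).toReal - (ν E).toReal|} ∧
      ∀ ω' : Measure (X × X), IsProbabilityMeasure ω' →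
        ω'.map Prod.fst = μ → ω'.map Prod.snd = ν →
        ω {p : X × X | p.1 ≠ p.2} ≤ ω' {p : X × X | p.1 ≠ p.2} := by
  classical
  obtain ⟨P, hP, hP1, hP2⟩ := hahn_decomposition (μ := μ) (ν := ν)
  set D : Set (X × X) := {p : X × X | p.1 ≠ p.2} with hDdef
  -- the common part and the residuals
  set lam : Measure X := μ.restrict Pᶜ + ν.restrict P with hlamdef
  have hle1 : ν.restrict P ≤ μ.restrict P := by
    refine Measure.le_iff.mpr fun s hs => ?_
    rw [Measure.restrict_apply hs, Measure.restrict_apply hs]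
    exact hP1 _ (hs.inter hP) Set.inter_subset_right
  have hle2 : μ.restrict Pᶜ ≤ ν.restrict Pᶜ := by
    refine Measure.le_iff.mpr fun s hs => ?_
    rw [Measure.restrict_apply hs, Measure.restrict_apply hs]
    exact hP2 _ (hs.inter hP.compl) Set.inter_subset_right
  set a : Measure X := μ.restrict P - ν.restrict P with hadef
  set b : Measure X := ν.restrict Pᶜ - μ.restrict Pᶜ with hbdef
  have hμsplit : lam + a = μ := by
    rw [hlamdef, hadef, add_assoc, add_comm (ν.restrict P),
      Measure.sub_add_cancel_of_le hle1, Measure.restrict_compl_add_restrict hP]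
  have hνsplit : lam + b = ν := by
    rw [hlamdef, hbdef, add_comm (μ.restrict Pᶜ), add_assoc, add_comm (μ.restrict Pᶜ),
      Measure.sub_add_cancel_of_le hle2]
    rw [add_comm, Measure.restrict_compl_add_restrict hP]
  set δ : ℝ≥0∞ := μ P - ν P with hδdef
  have hνP_le : ν P ≤ μ P := hP1 P hP (le_refl _)
  have ha_univ : a Set.univ = δ := by
    rw [hadef, Measure.sub_apply MeasurableSet.univ hle1,
      Measure.restrict_apply MeasurableSet.univ, Measure.restrict_apply MeasurableSet.univ,
      Set.univ_inter]
  have hδ_ne_top : δ ≠ ⊤ := by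
    rw [hδdef]
    exact ne_top_of_le_ne_top (measure_ne_top μ P) tsub_le_self
  have hlam_fin : lam Set.univ ≠ ⊤ := by
    rw [hlamdef]
    simp only [Measure.add_apply]
    exact ENNReal.add_ne_top.mpr ⟨measure_ne_top _ _, measure_ne_top _ _⟩
  have hb_univ : b Set.univ = δ := by
    have h1 : lam Set.univ + a Set.univ = 1 := by
      rw [← Measure.add_apply, hμsplit, measure_univ]
    have h2 : lam Set.univ + b Set.univ = 1 := by
      rw [← Measure.add_apply, hνsplit, measure_univ]
    have := h1.trans h2.symm
    rw [← ha_univ]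
    exact ((ENNReal.add_right_inj hlam_fin).mp this).symm
  haveI ha_fin : IsFiniteMeasure a := by
    constructor
    rw [ha_univ]
    exact lt_top_iff_ne_top.mpr hδ_ne_top
  haveI hb_fin : IsFiniteMeasure b := by
    constructor
    rw [hb_univ]
    exact lt_top_iff_ne_top.mpr hδ_ne_top
  -- residuals live on P and Pᶜ respectively
  have haPc : a Pᶜ = 0 := by
    have hsle : a ≤ μ.restrict P := Measure.sub_le
    have : a Pᶜ ≤ μ.restrict P Pᶜ := hsle Pᶜ
    rw [Measure.restrict_apply hP.compl, Set.compl_inter_self] at this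
    exact le_antisymm (this.trans (le_of_eq (measure_empty))) zero_le
  have hbP : b P = 0 := by
    have hsle : b ≤ ν.restrict Pᶜ := Measure.sub_le
    have : b P ≤ ν.restrict Pᶜ P := hsle P
    rw [Measure.restrict_apply hP] at this
    rw [Set.inter_compl_self] at this
    exact le_antisymm (this.trans (le_of_eq (measure_empty))) zero_le
  have hδ0a : δ = 0 → a = 0 := fun h => by
    apply Measure.measure_univ_eq_zero.mp; rw [ha_univ, h]
  -- the coupling
  have hdiag : Measurable fun x : X => (x, x) := measurable_id.prodMk measurable_id
  set ω : Measure (X × X) := lam.map (fun x => (x, x)) + δ⁻¹ • a.prod b with hωdef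
  have hsmul_a : δ⁻¹ • (δ • a) = a := by
    rw [smul_smul]
    by_cases hδ : δ = 0
    · rw [hδ0a hδ, smul_zero]
    · rw [ENNReal.inv_mul_cancel hδ hδ_ne_top, one_smul]
  have hsmul_b : δ⁻¹ • (δ • b) = b := by
    rw [smul_smul]
    by_cases hδ : δ = 0
    · have : b = 0 := Measure.measure_univ_eq_zero.mp (by rw [hb_univ, hδ])
      rw [this, smul_zero]
    · rw [ENNReal.inv_mul_cancel hδ hδ_ne_top, one_smul]
  have hmap_diag_fst : (lam.map fun x => (x, x)).map Prod.fst = lam := by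
    rw [Measure.map_map measurable_fst hdiag]
    exact Measure.map_id
  have hmap_diag_snd : (lam.map fun x => (x, x)).map Prod.snd = lam := by
    rw [Measure.map_map measurable_snd hdiag]
    exact Measure.map_id
  have hfst : ω.map Prod.fst = μ := by
    rw [hωdef, Measure.map_add _ _ measurable_fst, Measure.map_smul,
      hmap_diag_fst, Measure.map_fst_prod, hb_univ, hsmul_a, hμsplit]
  have hsnd : ω.map Prod.snd = ν := by
    rw [hωdef, Measure.map_add _ _ measurable_snd, Measure.map_smul,
      hmap_diag_snd, Measure.map_snd_prod, ha_univ, hsmul_b, hνsplit]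
  have hprob : IsProbabilityMeasure ω := by
    constructor
    have : (ω.map Prod.fst) Set.univ = ω Set.univ := by
      rw [Measure.map_apply measurable_fst MeasurableSet.univ, Set.preimage_univ]
    rw [← this, hfst, measure_univ]
  -- the off-diagonal mass of ω equals δ
  have hdiagD : (lam.map fun x => (x, x)) D = 0 := by
    rw [Measure.map_apply hdiag hD]
    have : (fun x : X => (x, x)) ⁻¹' D = ∅ := by
      ext x; simp [hDdef]
    rw [this, measure_empty]
  have hprodDc : (a.prod b) Dᶜ = 0 := by
    have hsub : Dᶜ ⊆ (Pᶜ ×ˢ Set.univ) ∪ (Set.univ ×ˢ P) := by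
      rintro ⟨x, y⟩ h
      simp only [hDdef, Set.mem_compl_iff, Set.mem_setOf_eq, not_not] at h
      by_cases hx : x ∈ P
      · right; exact ⟨Set.mem_univ _, h ▸ hx⟩
      · left; exact ⟨hx, Set.mem_univ _⟩
    refine le_antisymm (le_trans (measure_mono hsub) ?_) zero_le
    refine le_trans (measure_union_le _ _) ?_
    rw [Measure.prod_prod, Measure.prod_prod, haPc, hbP, zero_mul, mul_zero, add_zero]
  have hprodD : (a.prod b) D = δ * δ := by
    have h := measure_add_measure_compl (μ := a.prod b) hD
    rw [hprodDc, add_zero] at h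
    rw [h, ← Set.univ_prod_univ, Measure.prod_prod, ha_univ, hb_univ]
  have hωD : ω D = δ := by
    rw [hωdef, Measure.add_apply, hdiagD, zero_add, Measure.smul_apply, smul_eq_mul,
      hprodD]
    by_cases hδ : δ = 0
    · rw [hδ, mul_zero, mul_zero]
    · rw [← mul_assoc, ENNReal.inv_mul_cancel hδ hδ_ne_top, one_mul]
  -- real-valued facts
  have hμPc : (μ P).toReal + (μ Pᶜ).toReal = 1 := by
    rw [← ENNReal.toReal_add (measure_ne_top _ _) (measure_ne_top _ _),
      measure_add_measure_compl hP, measure_univ, ENNReal.toReal_one]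
  have hνPc : (ν P).toReal + (ν Pᶜ).toReal = 1 := by
    rw [← ENNReal.toReal_add (measure_ne_top _ _) (measure_ne_top _ _),
      measure_add_measure_compl hP, measure_univ, ENNReal.toReal_one]
  have hδreal : δ.toReal = (μ P).toReal - (ν P).toReal := by
    rw [hδdef, ENNReal.toReal_sub_of_le hνP_le (measure_ne_top _ _)]
  -- the sup is δ.toReal
  set S : Set ℝ := {r : ℝ | ∃ E : Set X, MeasurableSet E ∧ r = |(μ E).toReal - (ν E).toReal|}
    with hSdef
  have hub : ∀ r ∈ S, r ≤ δ.toReal := by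
    rintro r ⟨E, hE, rfl⟩
    have h1 : μ E + ν P ≤ ν E + μ P := key_ineq μ ν P hP hP1 hP2 E hE
    have h2 : ν E + μ Pᶜ ≤ μ E + ν Pᶜ := by
      refine key_ineq ν μ Pᶜ hP.compl hP2 (fun t ht hts => hP1 t ht ?_) E hE
      rwa [compl_compl] at hts
    have h1' : (μ E).toReal + (ν P).toReal ≤ (ν E).toReal + (μ P).toReal := by
      rw [← ENNReal.toReal_add (measure_ne_top _ _) (measure_ne_top _ _),
        ← ENNReal.toReal_add (measure_ne_top _ _) (measure_ne_top _ _)]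
      exact ENNReal.toReal_mono
        (ENNReal.add_ne_top.mpr ⟨measure_ne_top _ _, measure_ne_top _ _⟩) h1
    have h2' : (ν E).toReal + (μ Pᶜ).toReal ≤ (μ E).toReal + (ν Pᶜ).toReal := by
      rw [← ENNReal.toReal_add (measure_ne_top _ _) (measure_ne_top _ _),
        ← ENNReal.toReal_add (measure_ne_top _ _) (measure_ne_top _ _)]
      exact ENNReal.toReal_mono
        (ENNReal.add_ne_top.mpr ⟨measure_ne_top _ _, measure_ne_top _ _⟩) h2
    rw [abs_le]
    constructor
    · rw [hδreal]; linarith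
    · rw [hδreal]; linarith
  have hmem : δ.toReal ∈ S := by
    refine ⟨P, hP, ?_⟩
    rw [hδreal, abs_of_nonneg]
    have := ENNReal.toReal_mono (measure_ne_top μ P) hνP_le
    linarith
  have hSsup : sSup S = δ.toReal := by
    apply le_antisymm
    · exact csSup_le ⟨δ.toReal, hmem⟩ hub
    · exact le_csSup ⟨δ.toReal, hub⟩ hmem
  refine ⟨ω, hprob, hfst, hsnd, by rw [hωD, hSsup], ?_⟩
  -- minimality
  intro ω' _ hfst' hsnd'
  rw [hωD]
  have hμP : μ P = ω' (Prod.fst ⁻¹' P) := by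
    rw [← hfst', Measure.map_apply measurable_fst hP]
  have hνP' : ν P = ω' (Prod.snd ⁻¹' P) := by
    rw [← hsnd', Measure.map_apply measurable_snd hP]
  have hsub : Prod.fst ⁻¹' P ⊆ Prod.snd ⁻¹' P ∪ D := by
    rintro ⟨x, y⟩ hx
    simp only [Set.mem_preimage] at hx
    by_cases hy : y ∈ P
    · left; exact hy
    · right
      intro hxy
      have hxy' : x = y := hxy
      exact hy (hxy' ▸ hx)
  rw [hδdef]
  rw [tsub_le_iff_right]
  calc μ P = ω' (Prod.fst ⁻¹' P) := hμP
    _ ≤ ω' (Prod.snd ⁻¹' P ∪ D) := measure_mono hsub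
    _ ≤ ω' (Prod.snd ⁻¹' P) + ω' D := measure_union_le _ _
    _ = ν P + ω' D := by rw [hνP']
    _ = ω' D + ν P := add_comm _ _
end

section
/- The total variation distance between two exponential distributions Exp(λ) and Exp(λ') with λ ≠ λ', λ, λ' > 0, equals | e^{λ'(log λ − log λ')/(λ' − λ)} − e^{λ(log λ − log λ')/(λ − λ')} |. -/
open MeasureTheory ProbabilityTheory Real Set

lemma expMeasure_apply' (r : ℝ) {E : Set ℝ} (hE : MeasurableSet E) :
    expMeasure r E = ∫⁻ x in E, exponentialPDF r x := by
  rw [expMeasure, gammaMeasure, withDensity_apply _ hE]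
  rfl

lemma exponentialPDF_mono_left {l l' x : ℝ} (hl : 0 < l) (hl' : 0 < l') (hlt : l' < l)
    (hx : x ≤ (Real.log l - Real.log l') / (l - l')) :
    exponentialPDF l' x ≤ exponentialPDF l x := by
  rcases lt_or_ge x 0 with h | h
  · rw [exponentialPDF_of_neg h]; exact zero_le
  · rw [exponentialPDF_of_nonneg h, exponentialPDF_of_nonneg h]
    apply ENNReal.ofReal_le_ofReal
    have h1 : l' * rexp (-(l' * x)) = rexp (Real.log l' - l' * x) := by
      rw [sub_eq_add_neg, Real.exp_add, Real.exp_log hl']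
    have h2 : l * rexp (-(l * x)) = rexp (Real.log l - l * x) := by
      rw [sub_eq_add_neg, Real.exp_add, Real.exp_log hl]
    rw [h1, h2, Real.exp_le_exp]
    have := (le_div_iff₀ (sub_pos.2 hlt)).mp hx
    linarith
lemma exponentialPDF_mono_right {l l' x : ℝ} (hl : 0 < l) (hl' : 0 < l') (hlt : l' < l)
    (hx : (Real.log l - Real.log l') / (l - l') ≤ x) :
    exponentialPDF l x ≤ exponentialPDF l' x := by
  have ht : 0 < (Real.log l - Real.log l') / (l - l') :=
    div_pos (sub_pos.2 (Real.log_lt_log hl' hlt)) (sub_pos.2 hlt)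
  have h : 0 ≤ x := le_trans ht.le hx
  rw [exponentialPDF_of_nonneg h, exponentialPDF_of_nonneg h]
  apply ENNReal.ofReal_le_ofReal
  have h1 : l' * rexp (-(l' * x)) = rexp (Real.log l' - l' * x) := by
    rw [sub_eq_add_neg, Real.exp_add, Real.exp_log hl']
  have h2 : l * rexp (-(l * x)) = rexp (Real.log l - l * x) := by
    rw [sub_eq_add_neg, Real.exp_add, Real.exp_log hl]
  rw [h1, h2, Real.exp_le_exp]
  have := (div_le_iff₀ (sub_pos.2 hlt)).mp hx
  linarith

lemma expMeasure_toReal_Iic {r : ℝ} (hr : 0 < r) {t : ℝ} (ht : 0 ≤ t) :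
    ((expMeasure r) (Iic t)).toReal = 1 - rexp (-(r * t)) := by
  have := isProbabilityMeasure_expMeasure hr
  rw [← measureReal_def, ← cdf_eq_real]
  have h := cdf_expMeasure_eq hr t
  rw [if_pos ht] at h
  exact h

lemma split_toReal (μ : Measure ℝ) [IsProbabilityMeasure μ] {E : Set ℝ}
    (hE : MeasurableSet E) (t : ℝ) :
    (μ E).toReal = (μ (E ∩ Iic t)).toReal + (μ (E ∩ Ioi t)).toReal := by
  rw [← ENNReal.toReal_add (measure_ne_top μ _) (measure_ne_top μ _),
    ← measure_union ((Iic_disjoint_Ioi le_rfl).mono inter_subset_right inter_subset_right)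
      (hE.inter measurableSet_Ioi), ← inter_union_distrib_left, Iic_union_Ioi, inter_univ]

lemma aux_mono {l l' : ℝ} (hl : 0 < l) (hl' : 0 < l') (hlt : l' < l) {A : Set ℝ}
    (hA : MeasurableSet A) (hsub : A ⊆ Iic ((Real.log l - Real.log l') / (l - l'))) :
    ((expMeasure l') A).toReal ≤ ((expMeasure l) A).toReal := by
  have := isProbabilityMeasure_expMeasure hl
  refine ENNReal.toReal_mono (measure_ne_top _ _) ?_
  rw [expMeasure_apply' _ hA, expMeasure_apply' _ hA]
  refine setLIntegral_mono ((measurable_exponentialPDFReal l).ennreal_ofReal) fun x hx => ?_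
  exact exponentialPDF_mono_left hl hl' hlt (hsub hx)

lemma aux_mono' {l l' : ℝ} (hl : 0 < l) (hl' : 0 < l') (hlt : l' < l) {A : Set ℝ}
    (hA : MeasurableSet A) (hsub : A ⊆ Ioi ((Real.log l - Real.log l') / (l - l'))) :
    ((expMeasure l) A).toReal ≤ ((expMeasure l') A).toReal := by
  have := isProbabilityMeasure_expMeasure hl'
  refine ENNReal.toReal_mono (measure_ne_top _ _) ?_
  rw [expMeasure_apply' _ hA, expMeasure_apply' _ hA]
  refine setLIntegral_mono ((measurable_exponentialPDFReal l').ennreal_ofReal) fun x hx => ?_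
  exact exponentialPDF_mono_right hl hl' hlt (le_of_lt (hsub hx))

lemma tv_exp_aux (l l' : ℝ) (hl : 0 < l) (hl' : 0 < l') (hlt : l' < l) :
    sSup {r : ℝ | ∃ E : Set ℝ, MeasurableSet E ∧
        r = |((expMeasure l) E).toReal - ((expMeasure l') E).toReal|}
      = |Real.exp (-(l' * ((Real.log l - Real.log l') / (l - l')))) -
          Real.exp (-(l * ((Real.log l - Real.log l') / (l - l'))))| := by
  have hPl := isProbabilityMeasure_expMeasure hl
  have hPl' := isProbabilityMeasure_expMeasure hl'
  set t : ℝ := (Real.log l - Real.log l') / (l - l') with htdef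
  have ht : 0 < t :=
    div_pos (sub_pos.2 (Real.log_lt_log hl' hlt)) (sub_pos.2 hlt)
  set V : ℝ := rexp (-(l' * t)) - rexp (-(l * t)) with hVdef
  have hV : 0 ≤ V := by
    have : rexp (-(l * t)) ≤ rexp (-(l' * t)) := by
      apply Real.exp_le_exp.2; nlinarith
    linarith
  -- measures of the half-lines
  have hIicl := expMeasure_toReal_Iic hl ht.le
  have hIicl' := expMeasure_toReal_Iic hl' ht.le
  have hIoi : ∀ r : ℝ, 0 < r → ((expMeasure r) (Ioi t)).toReal = rexp (-(r * t)) := by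
    intro r hr
    have := isProbabilityMeasure_expMeasure hr
    have hc : (expMeasure r) (Ioi t) = 1 - (expMeasure r) (Iic t) := by
      rw [← Set.compl_Iic]; exact prob_compl_eq_one_sub measurableSet_Iic
    rw [hc, ENNReal.toReal_sub_of_le prob_le_one ENNReal.one_ne_top, ENNReal.toReal_one,
      expMeasure_toReal_Iic hr ht.le]
    ring
  -- the upper bound
  have hub : ∀ r ∈ {r : ℝ | ∃ E : Set ℝ, MeasurableSet E ∧
      r = |((expMeasure l) E).toReal - ((expMeasure l') E).toReal|}, r ≤ V := by
    rintro r ⟨E, hE, rfl⟩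
    have hsplitl := split_toReal (expMeasure l) hE t
    have hsplitl' := split_toReal (expMeasure l') hE t
    -- pieces
    have h1 : ((expMeasure l') (E ∩ Iic t)).toReal ≤ ((expMeasure l) (E ∩ Iic t)).toReal :=
      aux_mono hl hl' hlt (hE.inter measurableSet_Iic) inter_subset_right
    have h2 : ((expMeasure l') (Iic t \ E)).toReal ≤ ((expMeasure l) (Iic t \ E)).toReal :=
      aux_mono hl hl' hlt (measurableSet_Iic.diff hE) diff_subset
    have h3 : ((expMeasure l) (E ∩ Ioi t)).toReal ≤ ((expMeasure l') (E ∩ Ioi t)).toReal :=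
      aux_mono' hl hl' hlt (hE.inter measurableSet_Ioi) inter_subset_right
    have h4 : ((expMeasure l) (Ioi t \ E)).toReal ≤ ((expMeasure l') (Ioi t \ E)).toReal :=
      aux_mono' hl hl' hlt (measurableSet_Ioi.diff hE) diff_subset
    have h5 : ∀ r : ℝ, 0 < r → ((expMeasure r) (E ∩ Iic t)).toReal
        + ((expMeasure r) (Iic t \ E)).toReal = ((expMeasure r) (Iic t)).toReal := by
      intro r hr
      have := isProbabilityMeasure_expMeasure hr
      rw [← ENNReal.toReal_add (measure_ne_top _ _) (measure_ne_top _ _), Set.inter_comm,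
        measure_inter_add_diff _ hE]
    have h6 : ∀ r : ℝ, 0 < r → ((expMeasure r) (E ∩ Ioi t)).toReal
        + ((expMeasure r) (Ioi t \ E)).toReal = ((expMeasure r) (Ioi t)).toReal := by
      intro r hr
      have := isProbabilityMeasure_expMeasure hr
      rw [← ENNReal.toReal_add (measure_ne_top _ _) (measure_ne_top _ _), Set.inter_comm,
        measure_inter_add_diff _ hE]
    have h5l := h5 l hl; have h5l' := h5 l' hl'
    have h6l := h6 l hl; have h6l' := h6 l' hl'
    rw [hIoi l hl] at h6l; rw [hIoi l' hl'] at h6l'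
    rw [hIicl] at h5l; rw [hIicl'] at h5l'
    rw [abs_le]
    constructor <;> [skip; skip] <;> linarith
  apply le_antisymm
  · refine csSup_le ⟨_, ∅, MeasurableSet.empty, rfl⟩ fun r hr => ?_
    calc r ≤ V := hub r hr
    _ = |V| := (abs_of_nonneg hV).symm
  · refine le_csSup ⟨V, hub⟩ ?_
    refine ⟨Iic t, measurableSet_Iic, ?_⟩
    rw [hIicl, hIicl']
    congr 1
    ring

/-- Total variation distance between two exponential distributions `Exp(λ)`, `Exp(λ')`
with `λ ≠ λ'`: with `t* = (log λ − log λ')/(λ − λ')`, it equals `|e^{−λ' t*} − e^{−λ t*}|`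
(equivalently `|e^{λ'(log λ − log λ')/(λ' − λ)} − e^{−λ(log λ − log λ')/(λ − λ')}|`). -/
theorem totalVariation_exponential (l l' : ℝ) (hl : 0 < l) (hl' : 0 < l') (hne : l ≠ l') :
    sSup {r : ℝ | ∃ E : Set ℝ, MeasurableSet E ∧
        r = |((expMeasure l) E).toReal - ((expMeasure l') E).toReal|}
      = |Real.exp (-(l' * ((Real.log l - Real.log l') / (l - l')))) -
          Real.exp (-(l * ((Real.log l - Real.log l') / (l - l'))))| := by
  rcases hne.lt_or_gt with h | h
  · -- l < l' : apply aux with roles swapped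
    have key := tv_exp_aux l' l hl' hl h
    have hset : {r : ℝ | ∃ E : Set ℝ, MeasurableSet E ∧
        r = |((expMeasure l') E).toReal - ((expMeasure l) E).toReal|}
        = {r : ℝ | ∃ E : Set ℝ, MeasurableSet E ∧
        r = |((expMeasure l) E).toReal - ((expMeasure l') E).toReal|} := by
      ext r
      constructor <;> rintro ⟨E, hE, rfl⟩ <;> exact ⟨E, hE, (abs_sub_comm _ _)⟩
    rw [hset] at key
    rw [key]
    have htt : (Real.log l' - Real.log l) / (l' - l)
        = (Real.log l - Real.log l') / (l - l') := by
      rw [← neg_div_neg_eq]; ring_nf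
    rw [htt, abs_sub_comm]
  · exact tv_exp_aux l l' hl hl' h
end

section
/- Let S be a finite set and d : S × S → [0,1] a pseudometric with d(u,v) ∈ {0} exactly when u R v for an equivalence relation R (i.e., d(u,v) = 0 iff (u,v) ∈ R). Then for probability distributions μ, ν on S: K_d(μ, ν) = 0 if and only if μ(C) = ν(C) for every equivalence class C of R. -/
open Finset

/-- A coupling of two distributions on a finite set. -/
def IsCoupling {S : Type*} [Fintype S] (μ ν : S → ℝ) (ω : S × S → ℝ) : Prop :=
  (∀ p, 0 ≤ ω p) ∧ (∀ u, ∑ v, ω (u, v) = μ u) ∧ (∀ v, ∑ u, ω (u, v) = ν v)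

/-- The Kantorovich value of `d` between `μ` and `ν`. -/
noncomputable def Kant {S : Type*} [Fintype S] (d : S × S → ℝ) (μ ν : S → ℝ) : ℝ :=
  sInf {r : ℝ | ∃ ω, IsCoupling μ ν ω ∧ r = ∑ p : S × S, ω p * d p}

open Classical in
/-- If the kernel of the pseudometric `d` is the equivalence relation `R`, then
`K_d(μ,ν) = 0` iff `μ` and `ν` agree on every `R`-equivalence class. -/
theorem kantorovich_zero_iff_classes {S : Type*} [Fintype S]
    (R : S → S → Prop) (hR : Equivalence R)
    (d : S × S → ℝ) (hd01 : ∀ p, d p ∈ Set.Icc (0 : ℝ) 1)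
    (hrefl : ∀ x, d (x, x) = 0)
    (hsymm : ∀ x y, d (x, y) = d (y, x))
    (htri : ∀ x y z, d (x, z) ≤ d (x, y) + d (y, z))
    (hker : ∀ x y, d (x, y) = 0 ↔ R x y)
    (μ ν : S → ℝ) (hμ0 : ∀ x, 0 ≤ μ x) (hν0 : ∀ x, 0 ≤ ν x)
    (hμ1 : ∑ x, μ x = 1) (hν1 : ∑ x, ν x = 1) :
    Kant d μ ν = 0 ↔
      ∀ u : S, (∑ v, if R u v then μ v else 0) = (∑ v, if R u v then ν v else 0) := by
  classical
  set Kset : Set ℝ :=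
    {r : ℝ | ∃ ω, IsCoupling μ ν ω ∧ r = ∑ p : S × S, ω p * d p} with hKset
  have hKdef : Kant d μ ν = sInf Kset := rfl
  have hne : Kset.Nonempty := by
    refine ⟨∑ p : S × S, (μ p.1 * ν p.2) * d p,
      fun p => μ p.1 * ν p.2, ⟨?_, ?_, ?_⟩, rfl⟩
    · intro p; exact mul_nonneg (hμ0 _) (hν0 _)
    · intro u; dsimp only; rw [← Finset.mul_sum, hν1, mul_one]
    · intro v; dsimp only; rw [← Finset.sum_mul, hμ1, one_mul]
  have hlb : ∀ r ∈ Kset, (0:ℝ) ≤ r := by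
    rintro r ⟨ω, ⟨h0, _, _⟩, rfl⟩
    exact Finset.sum_nonneg fun p _ => mul_nonneg (h0 p) (hd01 p).1
  constructor
  · intro h0 u
    by_cases htotal : ∀ p : S × S, R p.1 p.2
    · have h1 : ∀ v : S, R u v := fun v => htotal (u, v)
      simp only [if_pos (h1 _)]
      rw [hμ1, hν1]
    · push_neg at htotal
      obtain ⟨p₀, hp₀⟩ := htotal
      set N : Finset (S × S) := Finset.univ.filter (fun p : S × S => ¬ R p.1 p.2) with hN
      have hNne : N.Nonempty := ⟨p₀, by simp [hN, hp₀]⟩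
      set ε : ℝ := N.inf' hNne d with hε
      have hεpos : 0 < ε := by
        obtain ⟨q, hq, hqe⟩ := Finset.exists_mem_eq_inf' hNne d
        rw [hε, hqe]
        rcases lt_or_eq_of_le (hd01 q).1 with h | h
        · exact h
        · exfalso
          have : R q.1 q.2 := (hker q.1 q.2).1 h.symm
          simp [hN] at hq
          exact hq this
      have hεle : ∀ p ∈ N, ε ≤ d p := fun p hp => Finset.inf'_le d hp
      set A : ℝ := ∑ v, if R u v then μ v else 0 with hA
      set B : ℝ := ∑ v, if R u v then ν v else 0 with hB
      have key : ∀ r ∈ Kset, ε * |A - B| ≤ r := by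
        rintro r ⟨ω, ⟨hω0, hω1, hω2⟩, rfl⟩
        have hAe : A = ∑ p : S × S, (if R u p.1 then ω p else 0) := by
          rw [hA, Fintype.sum_prod_type]
          refine Finset.sum_congr rfl fun v _ => ?_
          by_cases h : R u v
          · simp only [if_pos h, hω1 v]
          · simp [h]
        have hBe : B = ∑ p : S × S, (if R u p.2 then ω p else 0) := by
          rw [hB, Fintype.sum_prod_type_right]
          refine Finset.sum_congr rfl fun v _ => ?_
          by_cases h : R u v
          · simp only [if_pos h, hω2 v]
          · simp [h]
        have hdiff : A - B = ∑ p : S × S,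
            ((if R u p.1 then ω p else 0) - (if R u p.2 then ω p else 0)) := by
          rw [hAe, hBe, Finset.sum_sub_distrib]
        calc ε * |A - B|
            = |ε * (A - B)| := by
              rw [abs_mul, abs_of_pos hεpos]
          _ = |∑ p : S × S, ε * ((if R u p.1 then ω p else 0) - (if R u p.2 then ω p else 0))| := by
              rw [hdiff, Finset.mul_sum]
          _ ≤ ∑ p : S × S, |ε * ((if R u p.1 then ω p else 0) - (if R u p.2 then ω p else 0))| :=
              Finset.abs_sum_le_sum_abs _ _
          _ ≤ ∑ p : S × S, ω p * d p := by
              refine Finset.sum_le_sum fun p _ => ?_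
              by_cases h1 : R u p.1 <;> by_cases h2 : R u p.2
              · simp only [if_pos h1, if_pos h2, sub_self, mul_zero, abs_zero]
                exact mul_nonneg (hω0 p) (hd01 p).1
              · have hnR : ¬ R p.1 p.2 := fun h => h2 (hR.trans h1 h)
                have hpN : p ∈ N := by simp [hN, hnR]
                simp only [if_pos h1, if_neg h2, sub_zero, abs_mul,
                  abs_of_pos hεpos, abs_of_nonneg (hω0 p)]
                calc ε * ω p ≤ d p * ω p :=
                      mul_le_mul_of_nonneg_right (hεle p hpN) (hω0 p)
                  _ = ω p * d p := mul_comm _ _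
              · have hnR : ¬ R p.1 p.2 := fun h => h1 (hR.trans h2 (hR.symm h))
                have hpN : p ∈ N := by simp [hN, hnR]
                simp only [if_neg h1, if_pos h2, zero_sub, abs_mul, abs_neg,
                  abs_of_pos hεpos, abs_of_nonneg (hω0 p)]
                calc ε * ω p ≤ d p * ω p :=
                      mul_le_mul_of_nonneg_right (hεle p hpN) (hω0 p)
                  _ = ω p * d p := mul_comm _ _
              · simp only [if_neg h1, if_neg h2, sub_self, mul_zero, abs_zero]
                exact mul_nonneg (hω0 p) (hd01 p).1
      have h1 : ε * |A - B| ≤ sInf Kset := le_csInf hne key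
      rw [← hKdef, h0] at h1
      have habs : |A - B| = 0 := by
        by_contra hne'
        have hpos : 0 < |A - B| := lt_of_le_of_ne (abs_nonneg _) (Ne.symm hne')
        nlinarith
      exact sub_eq_zero.mp (abs_eq_zero.mp habs)
  · intro hclass
    set c : S → ℝ := fun u => ∑ v, if R u v then μ v else 0 with hc
    have hc0 : ∀ u, 0 ≤ c u :=
      fun u => Finset.sum_nonneg fun v _ => by
        split_ifs; exacts [hμ0 v, le_rfl]
    have hμc : ∀ u, μ u ≤ c u := by
      intro u
      show μ u ≤ ∑ v, if R u v then μ v else 0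
      calc μ u = if R u u then μ u else 0 := by rw [if_pos (hR.refl u)]
        _ ≤ ∑ v, if R u v then μ v else 0 :=
            Finset.single_le_sum (f := fun v => if R u v then μ v else 0)
              (fun v _ => by split_ifs; exacts [hμ0 v, le_rfl]) (Finset.mem_univ u)
    have hνc : ∀ u, ν u ≤ c u := by
      intro u
      show ν u ≤ ∑ v, if R u v then μ v else 0
      rw [hclass u]
      calc ν u = if R u u then ν u else 0 := by rw [if_pos (hR.refl u)]
        _ ≤ ∑ v, if R u v then ν v else 0 :=
            Finset.single_le_sum (f := fun v => if R u v then ν v else 0)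
              (fun v _ => by split_ifs; exacts [hν0 v, le_rfl]) (Finset.mem_univ u)
    have hccong : ∀ u v, R u v → c u = c v := by
      intro u v huv
      show (∑ w, if R u w then μ w else 0) = ∑ w, if R v w then μ w else 0
      refine Finset.sum_congr rfl fun w _ => ?_
      by_cases h : R u w
      · rw [if_pos h, if_pos (hR.trans (hR.symm huv) h)]
      · rw [if_neg h, if_neg fun h' => h (hR.trans huv h')]
    set ω : S × S → ℝ :=
      fun p => if R p.1 p.2 ∧ c p.1 ≠ 0 then μ p.1 * ν p.2 / c p.1 else 0 with hω
    have hcoup : IsCoupling μ ν ω := by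
      refine ⟨fun p => ?_, fun u => ?_, fun v => ?_⟩
      · rw [hω]
        dsimp only
        split_ifs
        · exact div_nonneg (mul_nonneg (hμ0 _) (hν0 _)) (hc0 _)
        · exact le_rfl
      · by_cases hcu : c u = 0
        · have hμu : μ u = 0 := le_antisymm (hcu ▸ hμc u) (hμ0 u)
          rw [hμu]
          refine Finset.sum_eq_zero fun v _ => ?_
          rw [hω]; simp [hcu]
        · have : ∑ v, ω (u, v) = (μ u / c u) * ∑ v, if R u v then ν v else 0 := by
            rw [Finset.mul_sum]
            refine Finset.sum_congr rfl fun v _ => ?_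
            rw [hω]
            dsimp only
            by_cases h : R u v
            · rw [if_pos ⟨h, hcu⟩, if_pos h]; ring
            · rw [if_neg (fun h' => h h'.1), if_neg h, mul_zero]
          rw [this, ← hclass u]
          have hcu' : (∑ v, if R u v then μ v else 0) = c u := rfl
          rw [hcu']
          field_simp
      · by_cases hcv : c v = 0
        · have hνv : ν v = 0 := le_antisymm (hcv ▸ hνc v) (hν0 v)
          rw [hνv]
          refine Finset.sum_eq_zero fun u _ => ?_
          rw [hω]
          dsimp only
          by_cases h : R u v
          · rw [if_neg]
            rintro ⟨_, hcu⟩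
            exact hcu ((hccong u v h).trans hcv)
          · rw [if_neg (fun h' => h h'.1)]
        · have : ∑ u, ω (u, v) = (ν v / c v) * ∑ u, if R u v then μ u else 0 := by
            rw [Finset.mul_sum]
            refine Finset.sum_congr rfl fun u _ => ?_
            rw [hω]
            dsimp only
            by_cases h : R u v
            · have hcu : c u = c v := hccong u v h
              rw [if_pos ⟨h, fun h' => hcv (hcu ▸ h')⟩, if_pos h, hcu]; ring
            · rw [if_neg (fun h' => h h'.1), if_neg h, mul_zero]
          have hsum : ∑ u, (if R u v then μ u else 0) = c v := by
            show _ = ∑ w, if R v w then μ w else 0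
            refine Finset.sum_congr rfl fun u _ => ?_
            by_cases h : R u v
            · rw [if_pos h, if_pos (hR.symm h)]
            · rw [if_neg h, if_neg (fun h' => h (hR.symm h'))]
          rw [this, hsum]
          field_simp
    have hzero : (0:ℝ) ∈ Kset := by
      refine ⟨ω, hcoup, ?_⟩
      symm
      refine Finset.sum_eq_zero fun p _ => ?_
      rw [hω]
      dsimp only
      by_cases h : R p.1 p.2 ∧ c p.1 ≠ 0
      · rw [if_pos h, (hker p.1 p.2).2 h.1, mul_zero]
      · rw [if_neg h, zero_mul]
    rw [hKdef]
    exact le_antisymm (csInf_le ⟨0, hlb⟩ hzero) (le_csInf hne hlb)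
end
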